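/- Let U, V be unitary on H_s ⊗ H_e, n = n_s·n_e. Then the minimum over unitary Φ on H_e of (2n)^{-1/2} ‖U − (1_s ⊗ Φ)V‖_HS equals √(1 − (1/n)‖Γ‖_Tr), where Γ = Tr_s(U V†) is the partial trace over H_s and ‖·‖_Tr is the trace norm. -/

import Mathlib

open Matrix Kronecker
open scoped ComplexOrder

/-- Hilbert–Schmidt (Frobenius) norm of a complex square matrix. -/
noncomputable def hsNorm {k : Type*} [Fintype k] (M : Matrix k k ℂ) : ℝ :=
  Real.sqrt (Matrix.trace (Mᴴ * M)).re

/-- Trace norm: trace of the positive-semidefinite square root of `Mᴴ * M`. -/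
noncomputable def traceNorm {k : Type*} [Fintype k] [DecidableEq k] (M : Matrix k k ℂ) : ℝ :=
  (Matrix.trace
    (((Matrix.posSemidef_conjTranspose_mul_self M).1.eigenvectorUnitary : Matrix k k ℂ) *
      Matrix.diagonal (((↑) : ℝ → ℂ) ∘ Real.sqrt ∘ (Matrix.posSemidef_conjTranspose_mul_self M).1.eigenvalues) *
      star ((Matrix.posSemidef_conjTranspose_mul_self M).1.eigenvectorUnitary : Matrix k k ℂ))).re

/-- Induced two-norm: the largest singular value of `M`. -/
noncomputable def twoNorm {k : Type*} [Fintype k] [DecidableEq k] (M : Matrix k k ℂ) : ℝ :=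
  ⨆ i, Real.sqrt
    ((Matrix.PosSemidef.isHermitian
      (Matrix.posSemidef_conjTranspose_mul_self M)).eigenvalues i)

/-- Partial trace over the environment factor `e`. -/
noncomputable def ptraceE {s e : Type*} [Fintype s] [Fintype e]
    (M : Matrix (s × e) (s × e) ℂ) : Matrix s s ℂ :=
  Matrix.of fun i j => ∑ ν : e, M (i, ν) (j, ν)

/-- Partial trace over the system factor `s`. -/
noncomputable def ptraceS {s e : Type*} [Fintype s] [Fintype e]
    (M : Matrix (s × e) (s × e) ℂ) : Matrix e e ℂ :=
  Matrix.of fun μ ν => ∑ i : s, M (i, μ) (i, ν)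

/-- A density matrix: positive semidefinite with unit trace. -/
def IsDensity {k : Type*} [Fintype k] (ρ : Matrix k k ℂ) : Prop :=
  ρ.PosSemidef ∧ Matrix.trace ρ = 1


/-! ### Auxiliary lemmas -/

section Aux

noncomputable def Matrix.PosSemidef.sqrt {n : Type*} [Fintype n] [DecidableEq n]
    {A : Matrix n n ℂ} (hA : A.PosSemidef) : Matrix n n ℂ :=
  (hA.1.eigenvectorUnitary : Matrix n n ℂ) *
    Matrix.diagonal (((↑) : ℝ → ℂ) ∘ Real.sqrt ∘ hA.1.eigenvalues) *
    star (hA.1.eigenvectorUnitary : Matrix n n ℂ)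

lemma Matrix.PosSemidef.posSemidef_sqrt {n : Type*} [Fintype n] [DecidableEq n]
    {A : Matrix n n ℂ} (hA : A.PosSemidef) : hA.sqrt.PosSemidef := by
  have hD : (Matrix.diagonal (((↑) : ℝ → ℂ) ∘ Real.sqrt ∘ hA.1.eigenvalues)).PosSemidef :=
    Matrix.posSemidef_diagonal_iff.mpr fun i => by
      simpa using Real.sqrt_nonneg (hA.1.eigenvalues i)
  exact hD.mul_mul_conjTranspose_same _

lemma Matrix.PosSemidef.sqrt_mul_self {n : Type*} [Fintype n] [DecidableEq n]
    {A : Matrix n n ℂ} (hA : A.PosSemidef) : hA.sqrt * hA.sqrt = A := by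
  have hu : star (hA.1.eigenvectorUnitary : Matrix n n ℂ) * (hA.1.eigenvectorUnitary : Matrix n n ℂ)
      = 1 := Unitary.coe_star_mul_self _
  have hs := hA.1.spectral_theorem
  rw [Unitary.conjStarAlgAut_apply] at hs
  unfold Matrix.PosSemidef.sqrt
  conv_rhs => rw [hs]
  calc _ = (hA.1.eigenvectorUnitary : Matrix n n ℂ) *
        (Matrix.diagonal (((↑) : ℝ → ℂ) ∘ Real.sqrt ∘ hA.1.eigenvalues) *
        (star (hA.1.eigenvectorUnitary : Matrix n n ℂ) * (hA.1.eigenvectorUnitary : Matrix n n ℂ)) *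
        Matrix.diagonal (((↑) : ℝ → ℂ) ∘ Real.sqrt ∘ hA.1.eigenvalues)) *
        star (hA.1.eigenvectorUnitary : Matrix n n ℂ) := by simp only [mul_assoc]
    _ = _ := by
      rw [hu, mul_one, Matrix.diagonal_mul_diagonal]
      congr 3
      funext i
      simp only [Function.comp_apply, ← Complex.ofReal_mul,
        Real.mul_self_sqrt (hA.eigenvalues_nonneg i)]
      rfl

lemma trace_kron_mul {s e : Type*} [Fintype s] [Fintype e] [DecidableEq s]
    (Φ : Matrix e e ℂ) (M : Matrix (s × e) (s × e) ℂ) :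
    Matrix.trace (((1 : Matrix s s ℂ) ⊗ₖ Φ) * M) = Matrix.trace (Φ * ptraceS M) := by
  have L : Matrix.trace (((1 : Matrix s s ℂ) ⊗ₖ Φ) * M)
      = ∑ i : s, ∑ μ : e, ∑ ν : e, Φ μ ν * M (i, ν) (i, μ) := by
    simp only [Matrix.trace, Matrix.diag, Matrix.mul_apply, kroneckerMap_apply,
      Matrix.one_apply, Fintype.sum_prod_type]
    refine Finset.sum_congr rfl fun i _ => Finset.sum_congr rfl fun μ _ => ?_
    rw [Finset.sum_comm]
    simp [ite_mul]
  have R : Matrix.trace (Φ * ptraceS M)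
      = ∑ μ : e, ∑ ν : e, ∑ i : s, Φ μ ν * M (i, ν) (i, μ) := by
    simp [Matrix.trace, Matrix.diag, Matrix.mul_apply, ptraceS, Finset.mul_sum]
  rw [L, R, Finset.sum_comm]
  exact Finset.sum_congr rfl fun μ _ => Finset.sum_comm

lemma ptraceS_conjTranspose {s e : Type*} [Fintype s] [Fintype e]
    (M : Matrix (s × e) (s × e) ℂ) : ptraceS Mᴴ = (ptraceS M)ᴴ := by
  ext μ ν
  simp [ptraceS, Matrix.conjTranspose_apply, map_sum]

lemma re_trace_conjTranspose_mul_self_nonneg {k : Type*} [Fintype k] (M : Matrix k k ℂ) :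
    0 ≤ (Matrix.trace (Mᴴ * M)).re := by
  simp only [Matrix.trace, Matrix.diag, Matrix.mul_apply, Matrix.conjTranspose_apply]
  rw [Complex.re_sum]
  refine Finset.sum_nonneg fun p _ => ?_
  rw [Complex.re_sum]
  refine Finset.sum_nonneg fun q _ => ?_
  have h : star (M q p) * M q p = (Complex.normSq (M q p) : ℂ) := by
    rw [Complex.star_def, mul_comm, Complex.mul_conj]
  rw [h]
  simpa using Complex.normSq_nonneg (M q p)

lemma kron_one_conjTranspose {s e : Type*} [Fintype s] [Fintype e] [DecidableEq s]
    (Φ : Matrix e e ℂ) :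
    ((1 : Matrix s s ℂ) ⊗ₖ Φ)ᴴ = (1 : Matrix s s ℂ) ⊗ₖ Φᴴ := by
  ext ⟨i, μ⟩ ⟨j, ν⟩
  simp only [Matrix.conjTranspose_apply, kroneckerMap_apply, Matrix.one_apply, star_mul',
    apply_ite, star_one, star_zero]
  by_cases h : i = j
  · subst h; simp
  · simp [h, Ne.symm h]
/-- For `M` unitary and `P` positive semidefinite, `Re Tr(M P) ≤ Re Tr P`. -/
lemma re_trace_mul_le {e : Type*} [Fintype e] [DecidableEq e]
    {M P : Matrix e e ℂ} (hM : M ∈ Matrix.unitaryGroup e ℂ) (hP : P.PosSemidef) :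
    (Matrix.trace (M * P)).re ≤ (Matrix.trace P).re := by
  classical
  set S := hP.sqrt with hSdef
  have hS : S.PosSemidef := hP.posSemidef_sqrt
  have hSS : S * S = P := hP.sqrt_mul_self
  have hSh : Sᴴ = S := hS.1
  have hconj : ∀ i j, star (S j i) = S i j := by
    intro i j; rw [← Matrix.conjTranspose_apply, hSh]
  set x : e → EuclideanSpace ℂ e := fun i => (WithLp.equiv 2 _).symm (fun j => S j i) with hx
  set y : e → EuclideanSpace ℂ e := fun i => (WithLp.equiv 2 _).symm (M *ᵥ fun j => S j i) with hy
  have inner_eq : ∀ (u v : e → ℂ),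
      (inner ℂ ((WithLp.equiv 2 (e → ℂ)).symm u) ((WithLp.equiv 2 (e → ℂ)).symm v) : ℂ)
        = dotProduct (star u) v := by
    intro u v
    simp [EuclideanSpace.inner_eq_star_dotProduct, dotProduct, mul_comm]
  have key1 : Matrix.trace (M * P) = ∑ i, (inner ℂ (x i) (y i) : ℂ) := by
    have h : M * P = M * S * S := by rw [← hSS, mul_assoc]
    rw [h, Matrix.trace_mul_comm]
    refine Finset.sum_congr rfl fun i _ => ?_
    rw [hx, hy, inner_eq]
    simp only [Matrix.mul_apply, dotProduct, Matrix.mulVec, dotProduct,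
      Pi.star_apply]
    refine Finset.sum_congr rfl fun j _ => ?_
    show S i j * (M * S) j i = star (S j i) * ∑ k : e, M j k * S k i
    rw [hconj i j, Matrix.mul_apply]
  have key2 : Matrix.trace P = ∑ i, (inner ℂ (x i) (x i) : ℂ) := by
    rw [← hSS]
    refine Finset.sum_congr rfl fun i _ => ?_
    rw [hx, inner_eq]
    simp only [Matrix.mul_apply, dotProduct, Pi.star_apply]
    refine Finset.sum_congr rfl fun j _ => ?_
    rw [hconj i j]
  have hnorm : ∀ i, ‖y i‖ = ‖x i‖ := by
    intro i
    have h2 : (inner ℂ (y i) (y i) : ℂ) = inner ℂ (x i) (x i) := by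
      rw [hy, hx, inner_eq, inner_eq, Matrix.star_mulVec, dotProduct_mulVec,
        Matrix.vecMul_vecMul, ← Matrix.star_eq_conjTranspose,
        Matrix.mem_unitaryGroup_iff'.mp hM, Matrix.vecMul_one]
    rw [inner_self_eq_norm_sq_to_K (𝕜 := ℂ), inner_self_eq_norm_sq_to_K (𝕜 := ℂ)] at h2
    have h3 : ‖y i‖ ^ 2 = ‖x i‖ ^ 2 := by exact_mod_cast h2
    rw [← Real.sqrt_sq (norm_nonneg (y i)), ← Real.sqrt_sq (norm_nonneg (x i)), h3]
  have hre : ∀ (u v : EuclideanSpace ℂ e), (inner ℂ u v : ℂ).re = RCLike.re (inner ℂ u v : ℂ) :=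
    fun _ _ => rfl
  calc (Matrix.trace (M * P)).re = ∑ i, (inner ℂ (x i) (y i) : ℂ).re := by
        rw [key1]; exact Complex.re_sum _ _
    _ ≤ ∑ i, (inner ℂ (x i) (x i) : ℂ).re := by
        refine Finset.sum_le_sum fun i _ => ?_
        rw [hre, hre]
        calc RCLike.re (inner ℂ (x i) (y i) : ℂ) ≤ ‖x i‖ * ‖y i‖ := re_inner_le_norm _ _
          _ = ‖x i‖ * ‖x i‖ := by rw [hnorm]
          _ = RCLike.re (inner ℂ (x i) (x i) : ℂ) := by
              exact (inner_self_eq_norm_mul_norm (𝕜 := ℂ) (x i)).symm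
    _ = (Matrix.trace P).re := by rw [key2]; exact (Complex.re_sum _ _).symm
lemma exists_polar {e : Type*} [Fintype e] [DecidableEq e] (Γ : Matrix e e ℂ) :
    ∃ W ∈ Matrix.unitaryGroup e ℂ,
      Γ = W * (Matrix.posSemidef_conjTranspose_mul_self Γ).sqrt := by
  classical
  set hP := Matrix.posSemidef_conjTranspose_mul_self Γ with hPdef
  set hH := hP.1 with hHdef
  set Q : Matrix e e ℂ := (hH.eigenvectorUnitary : Matrix e e ℂ) with hQdef
  set lam := hH.eigenvalues with hlamdef
  have hlam : ∀ i, 0 ≤ lam i := hP.eigenvalues_nonneg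
  set G : Matrix e e ℂ := Γ * Q with hGdef
  have hQu : star Q * Q = 1 := Matrix.mem_unitaryGroup_iff'.mp hH.eigenvectorUnitary.2
  have hQu' : Q * star Q = 1 := Matrix.mem_unitaryGroup_iff.mp hH.eigenvectorUnitary.2
  have hGG : Gᴴ * G = Matrix.diagonal (RCLike.ofReal ∘ lam) := by
    have h1 : Gᴴ * G = star Q * (Γᴴ * Γ) * Q := by
      rw [hGdef, Matrix.conjTranspose_mul, Matrix.star_eq_conjTranspose]
      simp only [mul_assoc]
    rw [h1]
    simpa using hH.conjStarAlgAut_star_eigenvectorUnitary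
  have hstar : ∀ r : ℝ, star (((r : ℂ))⁻¹) = ((r : ℂ))⁻¹ := fun r => by
    rw [star_inv₀]
    congr 1
    exact Complex.conj_ofReal r
  set v : e → EuclideanSpace ℂ e := fun i =>
    (WithLp.equiv 2 _).symm (((Real.sqrt (lam i))⁻¹ : ℂ) • fun k => G k i) with hv
  have inner_eq : ∀ (u w : e → ℂ),
      (inner ℂ ((WithLp.equiv 2 (e → ℂ)).symm u) ((WithLp.equiv 2 (e → ℂ)).symm w) : ℂ)
        = dotProduct (star u) w := by
    intro u w
    simp [EuclideanSpace.inner_eq_star_dotProduct, dotProduct, mul_comm]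
  have hinner : ∀ i j, (inner ℂ (v i) (v j) : ℂ)
      = ((Real.sqrt (lam i))⁻¹ : ℂ) * ((Real.sqrt (lam j))⁻¹ : ℂ)
        * Matrix.diagonal (RCLike.ofReal ∘ lam) i j := by
    intro i j
    rw [hv]
    simp only [inner_eq]
    rw [← hGG]
    simp only [dotProduct, Pi.star_apply, Pi.smul_apply, smul_eq_mul,
      Matrix.mul_apply, Matrix.conjTranspose_apply, star_mul', Finset.mul_sum]
    refine Finset.sum_congr rfl fun k _ => ?_
    rw [hstar]
    ring
  set sset : Set e := {i | lam i ≠ 0} with hsset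
  have horth : Orthonormal ℂ (sset.restrict v) := by
    rw [orthonormal_iff_ite]
    intro i j
    change inner ℂ (v i) (v j) = _
    rw [hinner]
    by_cases hij : (i : e) = (j : e)
    · have hij' : i = j := Subtype.ext hij
      subst hij'
      have hli : lam i ≠ 0 := i.2
      have hpos : 0 < lam (i : e) := lt_of_le_of_ne (hlam i) (Ne.symm hli)
      rw [Matrix.diagonal_apply_eq, if_pos rfl, Function.comp_apply]
      have hs : Real.sqrt (lam (i : e)) ≠ 0 := by
        positivity
      rw [show (RCLike.ofReal (lam (i:e)) : ℂ) = ((lam (i:e) : ℝ) : ℂ) from rfl]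
      rw [← Complex.ofReal_inv, ← Complex.ofReal_mul, ← Complex.ofReal_mul]
      norm_cast
      rw [← Real.mul_self_sqrt (hlam i)]
      field_simp
      rw [Real.sqrt_sq (Real.sqrt_nonneg _)]
    · rw [Matrix.diagonal_apply_ne _ hij, if_neg (fun h => hij (congrArg _ h))]
      ring
  obtain ⟨b, hb⟩ := horth.exists_orthonormalBasis_extension_of_card_eq
    (by simp [finrank_euclideanSpace])
  set B : Matrix e e ℂ := Matrix.of fun k i => (b i) k with hB
  have hBu : B ∈ Matrix.unitaryGroup e ℂ := by
    rw [Matrix.mem_unitaryGroup_iff']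
    ext i j
    rw [Matrix.mul_apply, Matrix.one_apply, ← (orthonormal_iff_ite.mp b.orthonormal) i j,
      show (inner ℂ (b i) (b j) : ℂ) = dotProduct (star fun k => (b i) k) (fun k => (b j) k)
        from by simp [EuclideanSpace.inner_eq_star_dotProduct, dotProduct, mul_comm]]
    refine Finset.sum_congr rfl fun k _ => ?_
    simp [Matrix.star_apply, hB]
  set D : Matrix e e ℂ := Matrix.diagonal (RCLike.ofReal ∘ Real.sqrt ∘ lam) with hD
  have hsqrt : hP.sqrt = Q * D * star Q := rfl
  have key : B * D = G := by
    ext k i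
    rw [Matrix.mul_apply]
    have hDapp : ∀ k', D k' i = if k' = i then ((Real.sqrt (lam i) : ℝ) : ℂ) else 0 := by
      intro k'
      by_cases h : k' = i
      · subst h; rw [hD, Matrix.diagonal_apply_eq, if_pos rfl]; rfl
      · rw [hD, Matrix.diagonal_apply_ne _ h, if_neg h]
    simp only [hDapp, mul_ite, mul_zero, Finset.sum_ite_eq, Finset.sum_ite_eq', Finset.mem_univ, if_true]
    by_cases hli : lam i = 0
    · have h0 : (Gᴴ * G) i i = 0 := by
        rw [hGG, Matrix.diagonal_apply_eq, Function.comp_apply, hli]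
        simp
      have hcol : (fun k' => G k' i) = 0 := by
        apply dotProduct_star_self_eq_zero.mp
        rw [← h0]
        simp [Matrix.mul_apply, Matrix.conjTranspose_apply, dotProduct]
      have hGk : G k i = 0 := congrFun hcol k
      rw [hGk, hli, Real.sqrt_zero]
      simp
    · have hbi : b i = v i := hb i hli
      have hpos : 0 < lam i := lt_of_le_of_ne (hlam i) (Ne.symm hli)
      have hs : Real.sqrt (lam i) ≠ 0 := by positivity
      have hBki : B k i = ((Real.sqrt (lam i))⁻¹ : ℂ) * G k i := by
        rw [hB]
        show (b i) k = _
        rw [hbi, hv]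
        rfl
      rw [hBki]
      have : ((Real.sqrt (lam i) : ℝ) : ℂ) ≠ 0 := by exact_mod_cast hs
      field_simp
  refine ⟨B * star Q, ?_, ?_⟩
  · exact Submonoid.mul_mem _ hBu (Unitary.star_mem hH.eigenvectorUnitary.2)
  · rw [hsqrt]
    calc Γ = G * star Q := by rw [hGdef, mul_assoc, hQu', mul_one]
      _ = B * D * star Q := by rw [key]
      _ = B * star Q * (Q * D * star Q) := by
          rw [show B * star Q * (Q * D * star Q) = B * (star Q * Q) * D * star Q from by
            simp only [mul_assoc], hQu, mul_one]

end Aux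
/-- `min_{Φ unitary} (2n)^{-1/2} ‖U − (1⊗Φ)V‖_HS = √(1 − ‖Tr_s(UV†)‖_Tr / n)`. -/
theorem stmt5 {s e : Type*} [Fintype s] [Fintype e] [DecidableEq s] [DecidableEq e]
    [Nonempty s] [Nonempty e]
    (U V : Matrix (s × e) (s × e) ℂ)
    (hU : U ∈ Matrix.unitaryGroup (s × e) ℂ) (hV : V ∈ Matrix.unitaryGroup (s × e) ℂ) :
    IsLeast {x : ℝ | ∃ Φ ∈ Matrix.unitaryGroup e ℂ,
        x = hsNorm (U - ((1 : Matrix s s ℂ) ⊗ₖ Φ) * V) /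
          Real.sqrt (2 * (Fintype.card (s × e)))}
      (Real.sqrt (1 - traceNorm (ptraceS (U * Vᴴ)) / (Fintype.card (s × e)))) := by
  classical
  set Γ : Matrix e e ℂ := ptraceS (U * Vᴴ) with hΓ
  set n : ℝ := (Fintype.card (s × e) : ℝ) with hn
  have hn0 : 0 < n := by
    rw [hn]
    exact_mod_cast Fintype.card_pos
  -- the expansion of the squared HS distance
  have expand : ∀ Φ, Φ ∈ Matrix.unitaryGroup e ℂ →
      (Matrix.trace ((U - ((1 : Matrix s s ℂ) ⊗ₖ Φ) * V)ᴴ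
        * (U - ((1 : Matrix s s ℂ) ⊗ₖ Φ) * V))).re
        = 2 * n - 2 * (Matrix.trace (Φ * Γᴴ)).re := by
    intro Φ hΦ
    set X : Matrix (s × e) (s × e) ℂ := (1 : Matrix s s ℂ) ⊗ₖ Φ with hX
    have hXX : Xᴴ * X = 1 := by
      rw [hX, kron_one_conjTranspose, ← Matrix.mul_kronecker_mul, one_mul,
        ← Matrix.star_eq_conjTranspose, Matrix.mem_unitaryGroup_iff'.mp hΦ,
        Matrix.one_kronecker_one]
    have hexp : (U - X * V)ᴴ * (U - X * V)
        = Uᴴ * U - Uᴴ * (X * V) - ((X * V)ᴴ * U - (X * V)ᴴ * (X * V)) := by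
      rw [Matrix.conjTranspose_sub]
      noncomm_ring
    have h1 : Matrix.trace (Uᴴ * U) = ((n : ℝ) : ℂ) := by
      rw [← Matrix.star_eq_conjTranspose, Matrix.mem_unitaryGroup_iff'.mp hU,
        Matrix.trace_one, hn]
      push_cast
      rfl
    have h2 : Matrix.trace ((X * V)ᴴ * (X * V)) = ((n : ℝ) : ℂ) := by
      have : (X * V)ᴴ * (X * V) = Vᴴ * (Xᴴ * X) * V := by
        rw [Matrix.conjTranspose_mul]
        noncomm_ring
      rw [this, hXX, mul_one, ← Matrix.star_eq_conjTranspose,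
        Matrix.mem_unitaryGroup_iff'.mp hV, Matrix.trace_one, hn]
      push_cast
      rfl
    have hc : Matrix.trace (Uᴴ * (X * V)) = Matrix.trace (Φ * Γᴴ) := by
      rw [Matrix.trace_mul_comm, mul_assoc, hX, trace_kron_mul]
      congr 1
      have : V * Uᴴ = (U * Vᴴ)ᴴ := by
        rw [Matrix.conjTranspose_mul, Matrix.conjTranspose_conjTranspose]
      rw [this, ptraceS_conjTranspose, hΓ]
    have hcc : Matrix.trace ((X * V)ᴴ * U) = star (Matrix.trace (Uᴴ * (X * V))) := by
      conv_rhs => rw [← Matrix.trace_conjTranspose]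
      congr 1
      rw [Matrix.conjTranspose_mul Uᴴ (X * V), Matrix.conjTranspose_conjTranspose]
    rw [hexp, Matrix.trace_sub, Matrix.trace_sub, Matrix.trace_sub, h1, h2, hc,
      hcc, hc]
    simp only [Complex.sub_re, Complex.ofReal_re, Complex.conj_re]
    have : (star (Matrix.trace (Φ * Γᴴ))).re = (Matrix.trace (Φ * Γᴴ)).re := by
      simp [Complex.star_def]
    rw [this]
    ring
  -- value of hsNorm
  have hsval : ∀ Φ, Φ ∈ Matrix.unitaryGroup e ℂ →
      hsNorm (U - ((1 : Matrix s s ℂ) ⊗ₖ Φ) * V)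
        = Real.sqrt (2 * n - 2 * (Matrix.trace (Φ * Γᴴ)).re) := by
    intro Φ hΦ
    rw [hsNorm, expand Φ hΦ]
  have hnonneg : ∀ Φ, Φ ∈ Matrix.unitaryGroup e ℂ →
      0 ≤ 2 * n - 2 * (Matrix.trace (Φ * Γᴴ)).re := by
    intro Φ hΦ
    rw [← expand Φ hΦ]
    exact re_trace_conjTranspose_mul_self_nonneg _
  -- polar decomposition of Γ
  set hPP := Matrix.posSemidef_conjTranspose_mul_self Γ with hPPdef
  set P : Matrix e e ℂ := hPP.sqrt with hPdef
  have hPpsd : P.PosSemidef := hPP.posSemidef_sqrt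
  obtain ⟨W, hWu, hWP⟩ := exists_polar Γ
  set t : ℝ := traceNorm Γ with htdef
  have htP : t = (Matrix.trace P).re := rfl
  have hΓH : Γᴴ = P * Wᴴ := by
    rw [hWP, Matrix.conjTranspose_mul, hPpsd.1]
  have hWt : (Matrix.trace (W * Γᴴ)).re = t := by
    rw [hΓH, Matrix.trace_mul_comm, mul_assoc, ← Matrix.star_eq_conjTranspose,
      Matrix.mem_unitaryGroup_iff'.mp hWu, mul_one, htP]
  have hbound : ∀ Φ, Φ ∈ Matrix.unitaryGroup e ℂ →
      (Matrix.trace (Φ * Γᴴ)).re ≤ t := by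
    intro Φ hΦ
    have h : Matrix.trace (Φ * Γᴴ) = Matrix.trace ((Wᴴ * Φ) * P) := by
      rw [hΓH, Matrix.trace_mul_comm, mul_assoc, Matrix.trace_mul_comm]
    rw [h]
    have hM : Wᴴ * Φ ∈ Matrix.unitaryGroup e ℂ := by
      rw [← Matrix.star_eq_conjTranspose]
      exact Submonoid.mul_mem _ (Unitary.star_mem hWu) hΦ
    exact (re_trace_mul_le hM hPpsd).trans_eq (by rw [htP])
  have ht_le : t ≤ n := by
    have := hnonneg W hWu
    rw [hWt] at this
    linarith
  -- rewrite the common normalization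
  have hnorm_eq : Real.sqrt (2 * (Fintype.card (s × e) : ℝ)) = Real.sqrt (2 * n) := by
    rw [hn]
  have hval : ∀ Φ, Φ ∈ Matrix.unitaryGroup e ℂ →
      hsNorm (U - ((1 : Matrix s s ℂ) ⊗ₖ Φ) * V)
          / Real.sqrt (2 * (Fintype.card (s × e) : ℝ))
        = Real.sqrt (1 - (Matrix.trace (Φ * Γᴴ)).re / n) := by
    intro Φ hΦ
    rw [hnorm_eq, hsval Φ hΦ, ← Real.sqrt_div (hnonneg Φ hΦ)]
    congr 1
    field_simp
  constructor
  · refine ⟨W, hWu, ?_⟩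
    rw [hval W hWu, hWt]
  · rintro x ⟨Φ, hΦ, rfl⟩
    rw [hval Φ hΦ]
    apply Real.sqrt_le_sqrt
    have : (Matrix.trace (Φ * Γᴴ)).re / n ≤ t / n := by
      gcongr
      exact hbound Φ hΦ
    linarith
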